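/- arXiv:1703.04773 — 3 statements merged into one kernel-verified Lean document; each statement's English description precedes it below -/
import Mathlib

section
/- Let X = {f entire : there exists R > 1 with limsup_n |c_n(f)|·(n!)²·R^n = ∞}, where c_n(f) = ∏_{j=0}^{n-1} (f^{(j)}(0))^{2^{n-1-j}}. Then 0 is not in the closure of X in the topology of uniform convergence on compact sets: there is no sequence (f_k) of functions in X that converges to the zero function uniformly on every compact subset of ℂ. -/
open Filter

/-- `c_n(f) = ∏_{j=0}^{n-1} (f^{(j)}(0))^{2^{n-1-j}}`. -/
noncomputable def c (n : ℕ) (f : ℂ → ℂ) : ℂ :=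
  ∏ j ∈ Finset.range n, (iteratedDeriv j f 0) ^ 2 ^ (n - 1 - j)

/-- Membership in `X`: `f` is entire and there is `R > 1` with
`limsup_n |c_n(f)|·(n!)²·Rⁿ = ∞`. -/
noncomputable def memX (f : ℂ → ℂ) : Prop :=
  Differentiable ℂ f ∧ ∃ R : ℝ, 1 < R ∧ ∀ M : ℝ, ∃ᶠ n in atTop,
    M ≤ ‖c n f‖ * (n.factorial : ℝ) ^ 2 * R ^ n

open intervalIntegral Real in
/-- Cauchy estimate: if an entire function is bounded by `ε` on the closed unit disc,
then its `j`-th derivative at `0` is bounded by `j! * ε`. -/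
lemma cauchy_bound {f : ℂ → ℂ} (hf : Differentiable ℂ f) {ε : ℝ}
    (hsmall : ∀ z : ℂ, ‖z‖ ≤ 1 → ‖f z‖ ≤ ε) (j : ℕ) :
    ‖iteratedDeriv j f 0‖ ≤ j.factorial * ε := by
  have h : HasFPowerSeriesOnBall f (cauchyPowerSeries f 0 ((1 : NNReal) : ℝ)) 0 ⊤ :=
    hf.hasFPowerSeriesOnBall 0 one_pos
  have key := h.factorial_smul (1 : ℂ) j
  set p := cauchyPowerSeries f 0 ((1 : NNReal) : ℝ)
  have hεnn : 0 ≤ ε := le_trans (norm_nonneg _) (hsmall 0 (by simp))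
  have hpj : ‖p j‖ ≤ ε := by
    have h1 := norm_cauchyPowerSeries_le f 0 ((1 : NNReal) : ℝ) j
    have hInt : (∫ θ : ℝ in (0:ℝ)..2 * π, ‖f (circleMap 0 ((1:NNReal):ℝ) θ)‖) ≤ 2 * π * ε := by
      have hc : Continuous fun θ : ℝ => ‖f (circleMap 0 ((1:NNReal):ℝ) θ)‖ :=
        (hf.continuous.comp (continuous_circleMap 0 _)).norm
      calc (∫ θ : ℝ in (0:ℝ)..2 * π, ‖f (circleMap 0 ((1:NNReal):ℝ) θ)‖)
          ≤ ∫ _ : ℝ in (0:ℝ)..2 * π, ε := by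
            apply intervalIntegral.integral_mono_on two_pi_pos.le
              (hc.intervalIntegrable _ _) (intervalIntegrable_const)
            intro θ _
            apply hsmall
            rw [norm_circleMap_zero]
            norm_num
        _ = 2 * π * ε := by simp [mul_comm]
    calc ‖p j‖ ≤ ((2 * π)⁻¹ * ∫ θ : ℝ in (0:ℝ)..2 * π, ‖f (circleMap 0 ((1:NNReal):ℝ) θ)‖) *
          |((1:NNReal):ℝ)|⁻¹ ^ j := h1
      _ ≤ ((2 * π)⁻¹ * (2 * π * ε)) * 1 := by
          have h2 : |((1:NNReal):ℝ)|⁻¹ ^ j = 1 := by norm_num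
          rw [h2]
          gcongr
      _ = ε := by field_simp
  calc ‖iteratedDeriv j f 0‖ = ‖iteratedFDeriv ℂ j f 0 fun _ => 1‖ := by
        rw [iteratedDeriv_eq_iteratedFDeriv]
    _ = ‖j.factorial • p j fun _ => 1‖ := by rw [key]
    _ = j.factorial * ‖p j fun _ => 1‖ := by
        rw [nsmul_eq_mul]; push_cast [map_mul]; simp
    _ ≤ j.factorial * (‖p j‖ * ∏ _i : Fin j, ‖(1:ℂ)‖) := by
        gcongr; exact (p j).le_opNorm _
    _ = j.factorial * ‖p j‖ := by
        rw [Finset.prod_const, norm_one, one_pow, mul_one]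
    _ ≤ j.factorial * ε := by gcongr

/-- The weighted sum `T n = ∑_{j<n} j² 2^{n-1-j}`. -/
def T (n : ℕ) : ℕ := ∑ j ∈ Finset.range n, j ^ 2 * 2 ^ (n - 1 - j)

lemma T_eq (n : ℕ) : T n + (n ^ 2 + 2 * n + 3) = 3 * 2 ^ n := by
  induction n with
  | zero => simp [T]
  | succ n ih =>
    have hstep : T (n + 1) = 2 * T n + n ^ 2 := by
      rw [T, Finset.sum_range_succ]
      have h1 : ∑ j ∈ Finset.range n, j ^ 2 * 2 ^ (n + 1 - 1 - j) = 2 * T n := by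
        rw [T, Finset.mul_sum]
        refine Finset.sum_congr rfl fun j hj => ?_
        have hj' : j < n := Finset.mem_range.mp hj
        have : n + 1 - 1 - j = (n - 1 - j) + 1 := by omega
        rw [this, pow_succ]; ring
      rw [h1]
      simp
    calc T (n + 1) + ((n + 1) ^ 2 + 2 * (n + 1) + 3)
        = 2 * (T n + (n ^ 2 + 2 * n + 3)) := by rw [hstep]; ring
      _ = 2 * (3 * 2 ^ n) := by rw [ih]
      _ = 3 * 2 ^ (n + 1) := by ring

lemma E_eq (n : ℕ) : (∑ j ∈ Finset.range n, 2 ^ (n - 1 - j)) + 1 = 2 ^ n := by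
  induction n with
  | zero => simp
  | succ n ih =>
    rw [Finset.sum_range_succ]
    have h1 : ∑ j ∈ Finset.range n, 2 ^ (n + 1 - 1 - j) =
        2 * ∑ j ∈ Finset.range n, 2 ^ (n - 1 - j) := by
      rw [Finset.mul_sum]
      refine Finset.sum_congr rfl fun j hj => ?_
      have hj' : j < n := Finset.mem_range.mp hj
      have : n + 1 - 1 - j = (n - 1 - j) + 1 := by omega
      rw [this, pow_succ]; ring
    rw [h1]
    simp only [Nat.add_sub_cancel, Nat.sub_self] at *
    omega

lemma fact_le (j : ℕ) : (j.factorial : ℝ) ≤ 2 ^ (j ^ 2) := by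
  have h1 : j.factorial ≤ 2 ^ (j ^ 2) := by
    calc j.factorial ≤ j ^ j := Nat.factorial_le_pow j
      _ ≤ (2 ^ j) ^ j := Nat.pow_le_pow_left (Nat.lt_two_pow_self (n := j)).le j
      _ = 2 ^ (j ^ 2) := by rw [← pow_mul, sq]
  exact_mod_cast h1

lemma poly_lt (L : ℕ) : ∀ᶠ n : ℕ in atTop, 2 * n ^ 2 + L * n + 4 < 2 ^ n := by
  have h0 := tendsto_pow_const_div_const_pow_of_one_lt 2 (one_lt_two (α := ℝ))
  have h1 : ∀ᶠ n : ℕ in atTop, (n : ℝ) ^ 2 / 2 ^ n < ((L : ℝ) + 7)⁻¹ :=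
    h0.eventually_lt_const (by positivity)
  filter_upwards [h1, eventually_ge_atTop 1] with n hn hn1
  have h2 : ((L : ℝ) + 7) * (n : ℝ) ^ 2 < 2 ^ n := by
    rw [div_lt_iff₀ (by positivity)] at hn
    calc ((L : ℝ) + 7) * (n : ℝ) ^ 2 = (n : ℝ) ^ 2 * ((L : ℝ) + 7) := by ring
      _ < ((L : ℝ) + 7)⁻¹ * 2 ^ n * ((L : ℝ) + 7) := by gcongr
      _ = 2 ^ n := by field_simp
  have h3 : (2 * n ^ 2 + L * n + 4 : ℝ) ≤ ((L : ℝ) + 7) * n ^ 2 := by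
    have : (1 : ℝ) ≤ (n : ℝ) := by exact_mod_cast hn1
    nlinarith [sq_nonneg ((n : ℝ) - 1)]
  have h4 := h3.trans_lt h2
  exact_mod_cast h4

/-- `0` is not in the closure of `X`: no sequence in `X` converges to `0`
uniformly on every compact subset of `ℂ`. -/
theorem zero_not_in_closure_X :
    ¬ ∃ f : ℕ → ℂ → ℂ, (∀ k, memX (f k)) ∧
      ∀ R > (0 : ℝ), ∀ ε > (0 : ℝ), ∃ K : ℕ, ∀ k ≥ K, ∀ z : ℂ,
        ‖z‖ ≤ R → ‖f k z‖ < ε := by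
  rintro ⟨f, hmem, hconv⟩
  obtain ⟨K, hK⟩ := hconv 1 one_pos ((16 : ℝ)⁻¹) (by norm_num)
  obtain ⟨hd, R, hR1, hfreq⟩ := hmem K
  have hsmall : ∀ z : ℂ, ‖z‖ ≤ 1 → ‖f K z‖ ≤ (16 : ℝ)⁻¹ :=
    fun z hz => (hK K le_rfl z hz).le
  have hder := cauchy_bound hd hsmall
  obtain ⟨L, hL⟩ := pow_unbounded_of_one_lt R (one_lt_two (α := ℝ))
  have hR0 : (0 : ℝ) < R := lt_trans one_pos hR1
  have hev : ∀ᶠ n in atTop,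
      ‖c n (f K)‖ * (n.factorial : ℝ) ^ 2 * R ^ n < 1 := by
    filter_upwards [poly_lt L] with n hpoly
    have h16' : (16 : ℝ) = 2 ^ 4 := by norm_num
    -- Step 1: bound |c n (f K)| by the product of derivative bounds
    have hc1 : ‖c n (f K)‖ ≤
        ∏ j ∈ Finset.range n, ((j.factorial : ℝ) * (16 : ℝ)⁻¹) ^ 2 ^ (n - 1 - j) := by
      rw [c, norm_prod]
      refine Finset.prod_le_prod (fun j _ => by positivity) (fun j _ => ?_)
      rw [norm_pow]
      exact pow_le_pow_left₀ (norm_nonneg _) (hder j) _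
    -- Step 2: bound that product by 2^(T n) * 16 * (16⁻¹)^(2^n)
    have hE : ((16 : ℝ)⁻¹) ^ (∑ j ∈ Finset.range n, 2 ^ (n - 1 - j)) =
        16 * ((16 : ℝ)⁻¹) ^ (2 ^ n) := by
      rw [← E_eq n, pow_succ]
      ring
    have hA : (∏ j ∈ Finset.range n, (j.factorial : ℝ) ^ 2 ^ (n - 1 - j)) ≤ (2 : ℝ) ^ T n := by
      calc ∏ j ∈ Finset.range n, (j.factorial : ℝ) ^ 2 ^ (n - 1 - j)
          ≤ ∏ j ∈ Finset.range n, ((2 : ℝ) ^ (j ^ 2)) ^ 2 ^ (n - 1 - j) :=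
            Finset.prod_le_prod (fun j _ => by positivity)
              (fun j _ => pow_le_pow_left₀ (by positivity) (fact_le j) _)
        _ = ∏ j ∈ Finset.range n, (2 : ℝ) ^ (j ^ 2 * 2 ^ (n - 1 - j)) :=
            Finset.prod_congr rfl fun j _ => by rw [pow_mul]
        _ = (2 : ℝ) ^ T n := by rw [T, Finset.prod_pow_eq_pow_sum]
    have hc2 : (∏ j ∈ Finset.range n, ((j.factorial : ℝ) * (16 : ℝ)⁻¹) ^ 2 ^ (n - 1 - j))
        ≤ (2 : ℝ) ^ T n * (16 * ((16 : ℝ)⁻¹) ^ (2 ^ n)) := by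
      rw [← hE]
      calc ∏ j ∈ Finset.range n, ((j.factorial : ℝ) * (16 : ℝ)⁻¹) ^ 2 ^ (n - 1 - j)
          = (∏ j ∈ Finset.range n, (j.factorial : ℝ) ^ 2 ^ (n - 1 - j)) *
            ((16 : ℝ)⁻¹) ^ (∑ j ∈ Finset.range n, 2 ^ (n - 1 - j)) := by
            rw [← Finset.prod_pow_eq_pow_sum, ← Finset.prod_mul_distrib]
            exact Finset.prod_congr rfl fun j _ => mul_pow _ _ _
        _ ≤ (2 : ℝ) ^ T n * ((16 : ℝ)⁻¹) ^ (∑ j ∈ Finset.range n, 2 ^ (n - 1 - j)) := by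
            gcongr
    -- Step 3: exponent comparison
    have hab : T n + (2 * n ^ 2 + L * n + 4) < 4 * 2 ^ n := by
      have h2 : T n ≤ 3 * 2 ^ n := le_trans (Nat.le_add_right _ _) (T_eq n).le
      calc T n + (2 * n ^ 2 + L * n + 4) < T n + 2 ^ n := Nat.add_lt_add_left hpoly _
        _ ≤ 3 * 2 ^ n + 2 ^ n := Nat.add_le_add_right h2 _
        _ = 4 * 2 ^ n := by ring
    -- Step 4: put everything together
    calc ‖c n (f K)‖ * (n.factorial : ℝ) ^ 2 * R ^ n
        ≤ ((2 : ℝ) ^ T n * (16 * ((16 : ℝ)⁻¹) ^ (2 ^ n))) *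
            ((2 : ℝ) ^ (n ^ 2)) ^ 2 * ((2 : ℝ) ^ L) ^ n := by
          gcongr
          · exact hc1.trans hc2
          · exact fact_le n
      _ = (2 : ℝ) ^ (T n + (2 * n ^ 2 + L * n + 4)) * ((2 : ℝ) ^ (4 * 2 ^ n))⁻¹ := by
          rw [h16', inv_pow, ← pow_mul, ← pow_mul, ← pow_mul, pow_add, pow_add, pow_add,
            Nat.mul_comm 2 (n ^ 2), Nat.mul_comm L n, Nat.mul_comm 4 (2 ^ n)]
          ring
      _ < 1 := by
          rw [← div_eq_mul_inv, div_lt_one (by positivity)]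
          exact pow_lt_pow_right₀ one_lt_two hab
  obtain ⟨n, hn1, hn2⟩ := ((hfreq 1).and_eventually hev).exists
  exact absurd hn1 (not_le.mpr hn2)
end

section
/- Let a, b ∈ ℂ and let P be the map on entire functions defined by P(g)(z) = g(z+a)·g(z+b). If g and f are entire functions and there is a strictly increasing sequence (k_l) of natural numbers such that P^{k_l}(g) converges to f uniformly on every compact subset of ℂ, then either f is identically zero or f(z) ≠ 0 for every z ∈ ℂ. -/
/-- The polynomial map `P(g)(z) = g(z+a)·g(z+b)` on functions `ℂ → ℂ`. -/
noncomputable def P (a b : ℂ) (g : ℂ → ℂ) : ℂ → ℂ := fun z => g (z + a) * g (z + b)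


/-- `u` vanishes to order at least `m` at `q`, witnessed globally. -/
def VOrd (u : ℂ → ℂ) (q : ℂ) (m : ℕ) : Prop :=
  ∃ ψ : ℂ → ℂ, Differentiable ℂ ψ ∧ ∀ z, u z = (z - q) ^ m * ψ z

lemma vord_zero {u : ℂ → ℂ} (hu : Differentiable ℂ u) (q : ℂ) : VOrd u q 0 :=
  ⟨u, hu, fun z => by simp⟩

lemma vord_one {u : ℂ → ℂ} (hu : Differentiable ℂ u) {w : ℂ} (h0 : u w = 0) : VOrd u w 1 := by
  refine ⟨dslope u w, fun z => ?_, fun z => ?_⟩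
  · rcases eq_or_ne z w with rfl | hz
    · obtain ⟨p, hp⟩ := hu.analyticAt z
      exact hp.has_fpower_series_dslope_fslope.analyticAt.differentiableAt
    · exact (differentiableAt_dslope_of_ne hz).2 (hu z)
  · have := sub_smul_dslope u w z
    rw [h0, sub_zero, smul_eq_mul] at this
    rw [pow_one, this]

lemma vord_mul {u v : ℂ → ℂ} {q : ℂ} {m m' : ℕ} (hu : VOrd u q m) (hv : VOrd v q m') :
    VOrd (fun z => u z * v z) q (m + m') := by
  obtain ⟨ψ, hψ, hψe⟩ := hu
  obtain ⟨φ, hφ, hφe⟩ := hv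
  exact ⟨fun z => ψ z * φ z, hψ.mul hφ, fun z => by show u z * v z = _; rw [hψe z, hφe z, pow_add]; ring⟩

lemma vord_shift {u : ℂ → ℂ} {q : ℂ} {m : ℕ} (t : ℂ) (h : VOrd u q m) :
    VOrd (fun z => u (z + t)) (q - t) m := by
  obtain ⟨ψ, hψ, hψe⟩ := h
  refine ⟨fun z => ψ (z + t), hψ.comp (differentiable_id.add_const t), fun z => ?_⟩
  show u (z + t) = _
  rw [hψe (z + t)]
  ring_nf

lemma vord_mono {u : ℂ → ℂ} {q : ℂ} {m M : ℕ} (h : VOrd u q m) (hM : M ≤ m) : VOrd u q M := by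
  obtain ⟨ψ, hψ, hψe⟩ := h
  refine ⟨fun z => (z - q) ^ (m - M) * ψ z, ((differentiable_id.sub_const q).pow _).mul hψ,
    fun z => ?_⟩
  rw [hψe z, ← mul_assoc, ← pow_add]
  congr 2
  omega

section iter

variable {a b : ℂ} {g : ℂ → ℂ}

lemma iter_diff (hg : Differentiable ℂ g) (n : ℕ) : Differentiable ℂ ((P a b)^[n] g) := by
  induction n with
  | zero => exact hg
  | succ n ih =>
    rw [Function.iterate_succ_apply']
    exact (ih.comp (differentiable_id.add_const a)).mul (ih.comp (differentiable_id.add_const b))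

lemma iter_zero (n : ℕ) (p : ℂ) (h : (P a b)^[n] g p = 0) :
    ∃ i j : ℕ, i + j = n ∧ g (p + (i : ℂ) * a + (j : ℂ) * b) = 0 := by
  induction n generalizing p with
  | zero => exact ⟨0, 0, rfl, by simpa using h⟩
  | succ n ih =>
    rw [Function.iterate_succ_apply'] at h
    rcases mul_eq_zero.1 h with h' | h'
    · obtain ⟨i, j, hij, hz⟩ := ih _ h'
      refine ⟨i + 1, j, by omega, ?_⟩
      have e : p + ((i + 1 : ℕ) : ℂ) * a + (j : ℂ) * b = p + a + (i : ℂ) * a + (j : ℂ) * b := by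
        push_cast; ring
      rw [e]; exact hz
    · obtain ⟨i, j, hij, hz⟩ := ih _ h'
      refine ⟨i, j + 1, by omega, ?_⟩
      have e : p + (i : ℂ) * a + ((j + 1 : ℕ) : ℂ) * b = p + b + (i : ℂ) * a + (j : ℂ) * b := by
        push_cast; ring
      rw [e]; exact hz

lemma vord_iter (hg : Differentiable ℂ g) :
    ∀ n i j : ℕ, i + j = n → ∀ w : ℂ, g w = 0 →
      VOrd ((P a b)^[n] g) (w - (i : ℂ) * a - (j : ℂ) * b) (n.choose i) := by
  intro n
  induction n with
  | zero =>
    intro i j hij w hw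
    obtain ⟨rfl, rfl⟩ : i = 0 ∧ j = 0 := by omega
    simpa using vord_one hg hw
  | succ n ih =>
    intro i j hij w hw
    rw [Function.iterate_succ_apply']
    show VOrd (fun z => (P a b)^[n] g (z + a) * (P a b)^[n] g (z + b)) _ _
    rcases Nat.eq_zero_or_pos i with rfl | hi
    · -- j = n+1
      have hj : j = n + 1 := by omega
      subst hj
      have h2 := vord_shift b (ih 0 n (by omega) w hw)
      have h1 := vord_zero (((iter_diff (a := a) (b := b) hg n).comp (differentiable_id.add_const a)) :
        Differentiable ℂ fun z => (P a b)^[n] g (z + a)) (w - ((0:ℕ) : ℂ) * a - ((n : ℕ) : ℂ) * b - b)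
      have h3 := vord_mul h1 h2
      have e : w - ((0:ℕ) : ℂ) * a - ((n : ℕ) : ℂ) * b - b = w - ((0:ℕ) : ℂ) * a - ((n + 1 : ℕ) : ℂ) * b := by
        push_cast; ring
      rw [e] at h3
      simpa using h3
    · obtain ⟨i', rfl⟩ : ∃ i', i = i' + 1 := ⟨i - 1, by omega⟩
      rcases Nat.eq_zero_or_pos j with rfl | hj
      · -- i = n+1
        have hi' : i' = n := by omega
        have h1 := vord_shift a (ih i' 0 (by omega) w hw)
        have h2 := vord_zero (((iter_diff (a := a) (b := b) hg n).comp (differentiable_id.add_const b)) :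
          Differentiable ℂ fun z => (P a b)^[n] g (z + b)) (w - ((i' : ℕ) : ℂ) * a - ((0:ℕ) : ℂ) * b - a)
        have h3 := vord_mul h1 h2
        have e : w - ((i' : ℕ) : ℂ) * a - ((0:ℕ) : ℂ) * b - a = w - ((i' + 1 : ℕ) : ℂ) * a - ((0:ℕ) : ℂ) * b := by
          push_cast; ring
        rw [e] at h3
        have hc : n.choose i' + 0 = (n+1).choose (i'+1) := by
          subst hi'; simp [Nat.choose_self, Nat.choose_succ_self_right]
        rw [hc] at h3
        simpa using h3
      · obtain ⟨j', rfl⟩ : ∃ j', j = j' + 1 := ⟨j - 1, by omega⟩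
        have h1 := vord_shift a (ih i' (j' + 1) (by omega) w hw)
        have h2 := vord_shift b (ih (i' + 1) j' (by omega) w hw)
        have e1 : w - ((i' : ℕ) : ℂ) * a - ((j' + 1 : ℕ) : ℂ) * b - a
            = w - ((i' + 1 : ℕ) : ℂ) * a - ((j' + 1 : ℕ) : ℂ) * b := by push_cast; ring
        have e2 : w - ((i' + 1 : ℕ) : ℂ) * a - ((j' : ℕ) : ℂ) * b - b
            = w - ((i' + 1 : ℕ) : ℂ) * a - ((j' + 1 : ℕ) : ℂ) * b := by push_cast; ring
        rw [e1] at h1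
        rw [e2] at h2
        have := vord_mul h1 h2
        rwa [Nat.choose_succ_succ] 

lemma choose_lb : ∀ n i j : ℕ, i + j = n → 1 ≤ i → 1 ≤ j → n ≤ n.choose i := by
  intro n
  induction n with
  | zero => omega
  | succ n ih =>
    intro i j hij hi hj
    obtain ⟨i', rfl⟩ : ∃ i', i = i' + 1 := ⟨i - 1, by omega⟩
    rw [Nat.choose_succ_succ]
    rcases Nat.eq_zero_or_pos i' with rfl | hi'
    · simp [Nat.choose_one_right]
    · have h1 : n ≤ n.choose i' := ih i' j (by omega) hi' hj
      have h2 : 0 < n.choose (i' + 1) := Nat.choose_pos (by omega)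
      have h3 : n.choose i'.succ = n.choose (i' + 1) := rfl
      omega

lemma key (hg : Differentiable ℂ g) (n : ℕ) (hn : 1 ≤ n) (p : ℂ)
    (hp : (P a b)^[n] g p = 0) :
    ∃ q : ℂ, dist q p ≤ ‖a - b‖ ∧ VOrd ((P a b)^[n] g) q n := by
  obtain ⟨i, j, hij, hw⟩ := iter_zero n p hp
  set w := p + (i : ℂ) * a + (j : ℂ) * b with hwdef
  rcases Nat.eq_zero_or_pos i with rfl | hi
  · -- j = n ≥ 1, use pair (1, j-1)
    obtain ⟨j', rfl⟩ : ∃ j', j = j' + 1 := ⟨j - 1, by omega⟩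
    have hv := vord_iter (a := a) (b := b) hg (j' + 1) 1 j' (by omega) w hw
    refine ⟨w - (1 : ℂ) * a - (j' : ℂ) * b, ?_, ?_⟩
    · have e : w - (1 : ℂ) * a - (j' : ℂ) * b - p = b - a := by
        rw [hwdef]; push_cast; ring
      rw [Complex.dist_eq, e, ← neg_sub a b, norm_neg]
    · have : n = j' + 1 := by omega
      subst this
      simpa [Nat.choose_one_right] using hv
  · rcases Nat.eq_zero_or_pos j with rfl | hj
    · -- i = n ≥ 1, use pair (i-1, 1)
      obtain ⟨i', rfl⟩ : ∃ i', i = i' + 1 := ⟨i - 1, by omega⟩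
      have hv := vord_iter (a := a) (b := b) hg (i' + 1) i' 1 (by omega) w hw
      refine ⟨w - (i' : ℂ) * a - (1 : ℂ) * b, ?_, ?_⟩
      · have e : w - (i' : ℂ) * a - (1 : ℂ) * b - p = a - b := by
          rw [hwdef]; push_cast; ring
        rw [Complex.dist_eq, e]
      · have hn' : n = i' + 1 := by omega
        have hc : (i' + 1).choose i' = i' + 1 := Nat.choose_succ_self_right i'
        rw [hc] at hv
        rw [hn']
        simpa using hv
    · have hv := vord_iter (a := a) (b := b) hg n i j hij w hw
      have e : w - (i : ℂ) * a - (j : ℂ) * b = p := by rw [hwdef]; ring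
      rw [e] at hv
      exact ⟨p, by simp, vord_mono hv (choose_lb n i j hij hi hj)⟩

end iter


/-- Any limit (uniformly on compacts, along a subsequence of iterates) of an
orbit of `P` is either identically zero or nowhere zero. -/
theorem accumulation_points_of_orbit (a b : ℂ) (g f : ℂ → ℂ)
    (hg : Differentiable ℂ g) (hf : Differentiable ℂ f)
    (k : ℕ → ℕ) (hk : StrictMono k)
    (hconv : ∀ R > (0 : ℝ), ∀ ε > (0 : ℝ), ∃ L : ℕ, ∀ l ≥ L, ∀ z : ℂ,
      ‖z‖ ≤ R → ‖(P a b)^[k l] g z - f z‖ < ε) :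
    (∀ z : ℂ, f z = 0) ∨ (∀ z : ℂ, f z ≠ 0) := by
  by_cases hzero : ∀ z : ℂ, f z = 0
  · exact Or.inl hzero
  push_neg at hzero
  obtain ⟨z1, hz1⟩ := hzero
  right
  intro z0 hz0
  -- identity theorem helper
  have hid : ∀ w : ℂ, (∀ᶠ z in nhds w, f z = 0) → False := by
    intro w hw
    have hA : AnalyticOnNhd ℂ f Set.univ := fun z _ => hf.analyticAt z
    exact hz1 (hA.eqOn_zero_of_preconnected_of_eventuallyEq_zero isPreconnected_univ
      (Set.mem_univ w) hw (Set.mem_univ z1))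
  -- find a radius r with f nonvanishing on the sphere around z0
  rcases (hf.analyticAt z0).eventually_eq_zero_or_eventually_ne_zero with hcase | hcase
  · exact hid z0 hcase
  rw [eventually_nhdsWithin_iff, Metric.eventually_nhds_iff] at hcase
  obtain ⟨ε0, hε0, hne⟩ := hcase
  set r : ℝ := ε0 / 2 with hrdef
  have hr : 0 < r := by positivity
  have hsne : ∀ z ∈ Metric.sphere z0 r, f z ≠ 0 := by
    intro z hz
    have hzz0 : z ≠ z0 := by
      intro h; rw [Metric.mem_sphere, h, dist_self] at hz; exact (ne_of_gt hr) hz.symm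
    exact hne (by rw [Metric.mem_sphere.1 hz]; linarith) hzz0
  -- min of |f| on the sphere
  obtain ⟨w0, hw0mem, hw0min⟩ := (isCompact_sphere z0 r).exists_isMinOn
    (NormedSpace.sphere_nonempty.mpr hr.le)
    ((continuous_norm.comp hf.continuous).continuousOn)
  set m : ℝ := ‖f w0‖ with hmdef
  have hm : 0 < m := norm_pos_iff.mpr (hsne w0 hw0mem)
  set ρ : ℝ := r + ‖a - b‖ with hρdef
  have hρ : 0 < ρ := by positivity
  set R : ℝ := ‖z0‖ + ρ + 2 with hRdef
  have habs : ∀ z : ℂ, ‖z - z0‖ ≤ ρ + 3 / 2 → ‖z‖ ≤ R := by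
    intro z hz
    have h2 : ‖z‖ ≤ ‖z - z0‖ + ‖z0‖ := by
      simpa using norm_add_le (z - z0) z0
    rw [hRdef]; linarith
  have hR : 0 < R := by positivity
  obtain ⟨L1, hL1⟩ := hconv R hR (m / 2) (by positivity)
  -- Step 2: for l ≥ L1 there is a zero of the iterate near z0
  have step2 : ∀ l ≥ L1, ∃ p, dist p z0 ≤ r ∧ (P a b)^[k l] g p = 0 := by
    intro l hl
    by_contra hno
    push_neg at hno
    set h : ℂ → ℂ := (P a b)^[k l] g with hhdef
    have hhd : Differentiable ℂ h := iter_diff hg (k l)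
    have habs' : ∀ z : ℂ, dist z z0 ≤ r → ‖z‖ ≤ R := by
      intro z hz
      refine habs z ?_
      rw [← Complex.dist_eq]
      have := norm_nonneg (a - b)
      rw [hρdef]; linarith
    have hnz : ∀ z ∈ Metric.closedBall z0 r, h z ≠ 0 := fun z hz =>
      hno z (Metric.mem_closedBall.1 hz)
    have hball : ∀ z ∈ Metric.sphere z0 r, ‖(h z)⁻¹‖ ≤ (m / 2)⁻¹ := by
      intro z hz
      have h1 : ‖h z - f z‖ < m / 2 :=
        hL1 l hl z (habs' z (le_of_eq (Metric.mem_sphere.1 hz)))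
      have h2 : m ≤ ‖f z‖ := hw0min hz
      have h4 := abs_norm_sub_norm_le (f z) (h z)
      have h5 : ‖f z - h z‖ = ‖h z - f z‖ := by
        rw [← neg_sub, norm_neg]
      have h6 : ‖f z‖ - ‖h z‖ ≤ ‖h z - f z‖ := by
        rw [← h5]
        exact le_trans (le_abs_self _) h4
      have h3 : m / 2 ≤ ‖h z‖ := by linarith
      rw [norm_inv]
      exact inv_anti₀ (by positivity) h3
    have hmax := Complex.norm_le_of_forall_mem_frontier_norm_le
      (U := Metric.ball z0 r) (C := (m / 2)⁻¹) Metric.isBounded_ball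
      (f := fun z => (h z)⁻¹) ?_ ?_ (z := z0) ?_
    · have hz00 : ‖h z0‖ < m / 2 := by
        have := hL1 l hl z0 (habs' z0 (by simp [hr.le]))
        rwa [hz0, sub_zero] at this
      have hz0ne : h z0 ≠ 0 := hnz z0 (Metric.mem_closedBall.2 (by simp [hr.le]))
      rw [norm_inv] at hmax
      have h5 : 0 < ‖h z0‖ := norm_pos_iff.mpr hz0ne
      have h6 : m / 2 ≤ ‖h z0‖ := (inv_le_inv₀ h5 (by positivity)).1 hmax
      linarith
    · constructor
      · intro z hz
        exact ((hhd z).inv (hnz z (Metric.ball_subset_closedBall hz))).differentiableWithinAt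
      · rw [closure_ball z0 (ne_of_gt hr)]
        exact ContinuousOn.inv₀ hhd.continuous.continuousOn hnz
    · intro z hz
      rw [frontier_ball z0 (ne_of_gt hr)] at hz
      exact hball z hz
    · rw [closure_ball z0 (ne_of_gt hr)]
      exact Metric.mem_closedBall.2 (by simp [hr.le])
  -- Step 3: high-order zeros in a fixed compact set
  set Lm : ℕ := L1 + 1 with hLmdef
  have hQ : ∀ l : ℕ, ∃ q : ℂ, q ∈ Metric.closedBall z0 ρ ∧
      VOrd ((P a b)^[k (l + Lm)] g) q (k (l + Lm)) := by
    intro l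
    obtain ⟨p, hp1, hp2⟩ := step2 (l + Lm) (by omega)
    have hn1 : 1 ≤ k (l + Lm) := by
      have := hk.le_apply (x := l + Lm)
      omega
    obtain ⟨q, hq1, hq2⟩ := key hg (k (l + Lm)) hn1 p hp2
    refine ⟨q, ?_, hq2⟩
    rw [Metric.mem_closedBall]
    calc dist q z0 ≤ dist q p + dist p z0 := dist_triangle _ _ _
      _ ≤ ‖a - b‖ + r := add_le_add hq1 hp1
      _ = ρ := by rw [hρdef]; ring
  choose Q hQmem hQord using hQ
  obtain ⟨qs, hqsK, φ, hφ, hφtend⟩ := (isCompact_closedBall z0 ρ).tendsto_subseq hQmem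
  -- bound for |f| on the big ball
  obtain ⟨C, hC⟩ := (isCompact_closedBall (0 : ℂ) R).exists_bound_of_continuousOn
    hf.continuous.continuousOn
  set B : ℝ := max C 0 + 1 with hBdef
  have hB : 0 < B := by positivity
  have hfB : ∀ z : ℂ, ‖z‖ ≤ R → ‖f z‖ ≤ max C 0 := by
    intro z hz
    exact le_trans (hC z (Metric.mem_closedBall.2 (by simpa [Complex.dist_eq] using hz)))
      (le_max_left _ _)
  have hqsz0 : dist qs z0 ≤ ρ := Metric.mem_closedBall.1 hqsK
  -- Step 4 : f vanishes on a ball around qs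
  have step4 : ∀ z : ℂ, dist z qs ≤ 1 / 2 → f z = 0 := by
    intro z hzdist
    have hzR : ‖z‖ ≤ R := by
      refine habs z ?_
      rw [← Complex.dist_eq]
      calc dist z z0 ≤ dist z qs + dist qs z0 := dist_triangle _ _ _
        _ ≤ ρ + 3 / 2 := by linarith
    have key4 : ∀ ε > (0 : ℝ), ‖f z‖ ≤ ε := by
      intro ε hε
      have htend : Filter.Tendsto (fun M : ℕ => B * (3 / 4 : ℝ) ^ M) Filter.atTop (nhds 0) := by
        have := tendsto_pow_atTop_nhds_zero_of_lt_one (by norm_num : (0:ℝ) ≤ 3/4)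
          (by norm_num : (3/4 : ℝ) < 1)
        simpa using this.const_mul B
      obtain ⟨M, hM⟩ := (htend.eventually_lt_const (show (0:ℝ) < ε / 2 by positivity)).exists
      set ε' : ℝ := min (ε / 2) 1 with hε'def
      have hε' : 0 < ε' := lt_min (by positivity) one_pos
      obtain ⟨L2, hL2⟩ := hconv R hR ε' hε'
      obtain ⟨J, hJ⟩ := (Metric.tendsto_atTop.1 hφtend) (1 / 4) (by norm_num)
      set jj : ℕ := max (max L2 M) J with hjjdef
      set tl : ℕ := φ jj + Lm with htldef
      have hφjj : jj ≤ φ jj := hφ.le_apply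
      have hL2tl : L2 ≤ tl := by
        have h1 : L2 ≤ jj := le_trans (le_max_left _ _) (le_max_left _ _)
        omega
      have hMk : M ≤ k tl := by
        have h1 : M ≤ jj := le_trans (le_max_right _ _) (le_max_left _ _)
        have h2 : tl ≤ k tl := hk.le_apply
        omega
      have hdistq : dist (Q (φ jj)) qs < 1 / 4 := by
        have := hJ jj (le_max_right _ _)
        simpa using this
      set n : ℕ := k tl with hndef
      set q : ℂ := Q (φ jj) with hqdef
      have hordn : VOrd ((P a b)^[n] g) q n := hQord (φ jj)
      obtain ⟨ψ, hψd, hψe⟩ := vord_mono hordn hMk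
      have hqz0 : dist q z0 ≤ ρ := Metric.mem_closedBall.1 (hQmem (φ jj))
      -- sup bound of ψ on sphere q 1
      have hψb : ∀ w ∈ Metric.sphere q 1, ‖ψ w‖ ≤ B := by
        intro w hw
        have hw1 : ‖w - q‖ = 1 := by
          rw [← Complex.dist_eq]; exact Metric.mem_sphere.1 hw
        have hwR : ‖w‖ ≤ R := by
          refine habs w ?_
          rw [← Complex.dist_eq]
          calc dist w z0 ≤ dist w q + dist q z0 := dist_triangle _ _ _
            _ ≤ ρ + 3 / 2 := by
                have : dist w q = 1 := Metric.mem_sphere.1 hw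
                linarith
        have heq : ‖(P a b)^[n] g w‖ = ‖ψ w‖ := by
          rw [hψe w, norm_mul, norm_pow, hw1, one_pow, one_mul]
        have h1 : ‖(P a b)^[n] g w - f w‖ < ε' := hL2 tl hL2tl w hwR
        have h2 : ‖f w‖ ≤ max C 0 := hfB w hwR
        have h3 : ‖(P a b)^[n] g w‖ ≤
            ‖(P a b)^[n] g w - f w‖ + ‖f w‖ := by
          simpa using norm_add_le ((P a b)^[n] g w - f w) (f w)
        have hε'1 : ε' ≤ 1 := min_le_right _ _
        rw [← heq, hBdef]
        linarith
      -- maximum principle for ψ on the unit ball around q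
      have hmax := Complex.norm_le_of_forall_mem_frontier_norm_le
        (U := Metric.ball q 1) (C := B) Metric.isBounded_ball hψd.diffContOnCl
        (fun w hw => hψb w (by rwa [frontier_ball q one_ne_zero] at hw)) (z := z) ?_
      · -- combine everything
        have hzq : ‖z - q‖ ≤ 3 / 4 := by
          rw [← Complex.dist_eq]
          calc dist z q ≤ dist z qs + dist qs q := dist_triangle _ _ _
            _ ≤ 3 / 4 := by
                rw [dist_comm qs q]
                linarith
        have hhz : ‖(P a b)^[n] g z‖ ≤ (3 / 4) ^ M * B := by
          rw [hψe z, norm_mul, norm_pow]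
          have h1 : ‖z - q‖ ^ M ≤ (3 / 4) ^ M :=
            pow_le_pow_left₀ (norm_nonneg _) hzq M
          have h2 : ‖ψ z‖ ≤ B := hmax
          exact mul_le_mul h1 h2 (norm_nonneg _) (by positivity)
        have h1 : ‖f z - (P a b)^[n] g z‖ < ε' := by
          have := hL2 tl hL2tl z hzR
          rwa [← neg_sub, norm_neg] at this
        have h3 : ‖f z‖ ≤
            ‖f z - (P a b)^[n] g z‖ + ‖(P a b)^[n] g z‖ := by
          simpa using norm_add_le (f z - (P a b)^[n] g z) ((P a b)^[n] g z)
        have hε'2 : ε' ≤ ε / 2 := min_le_left _ _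
        have hM' : (3 / 4 : ℝ) ^ M * B < ε / 2 := by
          rw [mul_comm]; exact hM
        linarith
      · rw [closure_ball q one_ne_zero]
        rw [Metric.mem_closedBall]
        calc dist z q ≤ dist z qs + dist qs q := dist_triangle _ _ _
          _ ≤ 1 := by rw [dist_comm qs q]; linarith
    have hle : ‖f z‖ ≤ 0 := by
      by_contra hlt
      push_neg at hlt
      have := key4 (‖f z‖ / 2) (by positivity)
      linarith
    exact norm_eq_zero.1 (le_antisymm hle (norm_nonneg _))
  -- conclude f ≡ 0 near qs : contradiction
  exact hid qs (Filter.eventually_of_mem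
    (Metric.closedBall_mem_nhds qs (by norm_num : (0:ℝ) < 1/2))
    (fun z hz => step4 z (Metric.mem_closedBall.1 hz)))
end

section
/- For every a, b ∈ ℂ, the map P defined on entire functions by P(g)(z) = g(z+a)·g(z+b) is not hypercyclic on H(ℂ): there is no entire function g such that for every entire function f and every ε > 0, R > 0 there exists n ∈ ℕ with sup_{|z| ≤ R} |P^n(g)(z) − f(z)| < ε. -/
open Metric Set

lemma abs_tri (x y : ℂ) : ‖x - y‖ ≤ ‖x‖ + ‖y‖ := by
  simpa [sub_eq_add_neg] using norm_add_le x (-y)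

lemma abs_lower (x y : ℂ) : ‖x‖ - ‖y‖ ≤ ‖x - y‖ := by
  have := abs_norm_sub_norm_le x y
  have := abs_le.mp this
  linarith [this.2]

lemma P_diff {a b : ℂ} {g : ℂ → ℂ} (hg : Differentiable ℂ g) : Differentiable ℂ (P a b g) :=
  (hg.comp (differentiable_id.add_const a)).mul (hg.comp (differentiable_id.add_const b))

lemma P_iter_diff {a b : ℂ} {g : ℂ → ℂ} (hg : Differentiable ℂ g) (n : ℕ) :
    Differentiable ℂ ((P a b)^[n] g) := by
  induction n with
  | zero => simpa using hg
  | succ n ih => rw [Function.iterate_succ_apply']; exact P_diff ih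

lemma exists_zero {h : ℂ → ℂ} (hd : Differentiable ℂ h) (p : ℂ) {ε : ℝ} (hε : 0 < ε)
    (happ : ∀ z ∈ closedBall p (3 * ε), ‖h z - (z - p)‖ < ε) :
    ∃ z₀ ∈ closedBall p (3 * ε), h z₀ = 0 := by
  by_contra hc
  push_neg at hc
  have h3ε : (0:ℝ) < 3 * ε := by linarith
  have key : ‖(h p)⁻¹‖ ≤ (2 * ε)⁻¹ := by
    apply Complex.norm_le_of_forall_mem_frontier_norm_le (isBounded_ball (x := p) (r := 3 * ε))
      (f := fun z => (h z)⁻¹)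
    · constructor
      · intro z hz
        exact ((hd z).inv (hc z (ball_subset_closedBall hz))).differentiableWithinAt
      · rw [closure_ball p (ne_of_gt h3ε)]
        exact ContinuousOn.inv₀ hd.continuous.continuousOn hc
    · intro z hz
      rw [frontier_ball p (ne_of_gt h3ε)] at hz
      have hzc : z ∈ closedBall p (3 * ε) := sphere_subset_closedBall hz
      have hzp : ‖z - p‖ = 3 * ε := by
        rw [mem_sphere_iff_norm] at hz
        exact hz
      have h1 : 2 * ε ≤ ‖h z‖ := by
        have h2 := happ z hzc
        have h3 := abs_lower (z - p) (h z)
        rw [norm_sub_rev (z - p) (h z)] at h3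
        linarith
      rw [norm_inv]
      exact inv_anti₀ (by linarith) h1
    · rw [closure_ball p (ne_of_gt h3ε)]
      exact mem_closedBall_self (le_of_lt h3ε)
  have hp : p ∈ closedBall p (3 * ε) := mem_closedBall_self (le_of_lt h3ε)
  have hhp : ‖h p‖ < ε := by simpa using happ p hp
  have hhp0 : h p ≠ 0 := hc p hp
  rw [norm_inv] at key
  have h0 : (0:ℝ) < ‖h p‖ := norm_pos_iff.mpr hhp0
  have h2 : 2 * ε ≤ ‖h p‖ :=
    (inv_le_inv₀ h0 (by linarith)).mp key
  linarith

lemma keyA {a b : ℂ} {u : ℂ → ℂ} (p : ℂ) {ε : ℝ}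
    (hε : 0 < ε) (hε2 : ε ≤ 1/8) (hε1 : 8 * ε ≤ ‖a - b‖)
    (hu : Differentiable ℂ u)
    (happ : ∀ z : ℂ, ‖z‖ ≤ ‖p‖ + ‖a - b‖ + 1 →
      ‖P a b u z - (z - p)‖ < ε) : False := by
  set c := a - b with hc
  set R := ‖p‖ + ‖c‖ + 1 with hR
  have hd : Differentiable ℂ (P a b u) := P_diff hu
  have happ' : ∀ z ∈ closedBall p (3 * ε), ‖P a b u z - (z - p)‖ < ε := by
    intro z hz
    rw [mem_closedBall, Complex.dist_eq] at hz
    apply happ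
    have h3 : ‖z‖ ≤ ‖z - p‖ + ‖p‖ := by
      have := norm_add_le (z - p) p
      simpa using this
    have := norm_nonneg c
    rw [hR]; linarith
  obtain ⟨z₀, hz₀ball, hz₀⟩ := exists_zero hd p hε happ'
  rw [mem_closedBall, Complex.dist_eq] at hz₀ball
  have hz₀abs : ‖z₀‖ ≤ ‖p‖ + 3 * ε := by
    have h3 : ‖z₀‖ ≤ ‖z₀ - p‖ + ‖p‖ := by
      have := norm_add_le (z₀ - p) p
      simpa using this
    linarith
  have hmul : u (z₀ + a) = 0 ∨ u (z₀ + b) = 0 := mul_eq_zero.mp hz₀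
  have hw : ∃ w : ℂ, ‖w - z₀‖ = ‖c‖ ∧ P a b u w = 0 := by
    rcases hmul with h1 | h1
    · refine ⟨z₀ + a - b, ?_, ?_⟩
      · have he : z₀ + a - b - z₀ = c := by rw [hc]; ring
        rw [he]
      · show u (z₀ + a - b + a) * u (z₀ + a - b + b) = 0
        have he : z₀ + a - b + b = z₀ + a := by ring
        rw [he, h1, mul_zero]
    · refine ⟨z₀ + b - a, ?_, ?_⟩
      · have he : z₀ + b - a - z₀ = -c := by rw [hc]; ring
        rw [he, norm_neg]
      · show u (z₀ + b - a + a) * u (z₀ + b - a + b) = 0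
        have he : z₀ + b - a + a = z₀ + b := by ring
        rw [he, h1, zero_mul]
  obtain ⟨w, hwdist, hwzero⟩ := hw
  have hwabs : ‖w‖ ≤ R := by
    have h3 : ‖w‖ ≤ ‖w - z₀‖ + ‖z₀‖ := by
      have := norm_add_le (w - z₀) z₀
      simpa using this
    rw [hR, hwdist] at *
    linarith
  have hfar := happ w hwabs
  rw [hwzero] at hfar
  rw [zero_sub, norm_neg] at hfar
  have h4 : ‖w - z₀‖ ≤ ‖w - p‖ + ‖z₀ - p‖ := by
    have h5 := norm_sub_le_norm_sub_add_norm_sub w p z₀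
    rw [norm_sub_rev p z₀] at h5
    exact h5
  rw [hwdist] at h4
  linarith

lemma keyB {a : ℂ} {u : ℂ → ℂ} (p : ℂ) (hu : Differentiable ℂ u)
    (happ : ∀ z : ℂ, ‖z‖ ≤ ‖p‖ + 2 →
      ‖P a a u z - (z - p)‖ < 1/100) : False := by
  set h := P a a u with hH
  have hd : Differentiable ℂ h := P_diff hu
  set v : ℂ → ℂ := fun z => u (z + a) with hv
  have hvd : Differentiable ℂ v := hu.comp (differentiable_id.add_const a)
  have hsq : ∀ z, h z = v z * v z := fun z => rfl
  have hε : (0:ℝ) < 1/100 := by norm_num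
  have happ' : ∀ z ∈ closedBall p (3 * (1/100)), ‖h z - (z - p)‖ < 1/100 := by
    intro z hz
    rw [mem_closedBall, Complex.dist_eq] at hz
    apply happ
    have h3 : ‖z‖ ≤ ‖z - p‖ + ‖p‖ := by
      have := norm_add_le (z - p) p
      simpa using this
    linarith
  obtain ⟨z₀, hz₀ball, hz₀⟩ := exists_zero hd p hε happ'
  rw [mem_closedBall, Complex.dist_eq] at hz₀ball
  have hz₀abs : ‖z₀‖ ≤ ‖p‖ + 3/100 := by
    have h3 : ‖z₀‖ ≤ ‖z₀ - p‖ + ‖p‖ := by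
      have := norm_add_le (z₀ - p) p
      simpa using this
    linarith
  have hvz₀ : v z₀ = 0 := by
    have h1 := hsq z₀
    rw [hz₀] at h1
    exact mul_self_eq_zero.mp h1.symm
  have hball : ∀ z ∈ ball z₀ 1, ‖z‖ ≤ ‖p‖ + 2 := by
    intro z hz
    rw [mem_ball, Complex.dist_eq] at hz
    have h3 : ‖z‖ ≤ ‖z - z₀‖ + ‖z₀‖ := by
      have := norm_add_le (z - z₀) z₀
      simpa using this
    linarith
  have hmaps : MapsTo v (ball z₀ 1) (ball (v z₀) 1.1) := by
    intro z hz
    rw [hvz₀, mem_ball, Complex.dist_eq, sub_zero]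
    have h1 := happ z (hball z hz)
    rw [mem_ball, Complex.dist_eq] at hz
    have h2 : ‖h z‖ ≤ ‖z - p‖ + 1/100 := by
      have h3 : ‖h z‖ ≤ ‖h z - (z - p)‖ + ‖z - p‖ := by
        have := norm_add_le (h z - (z - p)) (z - p)
        simpa using this
      linarith
    have h4 : ‖z - p‖ ≤ ‖z - z₀‖ + ‖z₀ - p‖ := by
      have := norm_add_le (z - z₀) (z₀ - p)
      have he : z - z₀ + (z₀ - p) = z - p := by ring
      rwa [he] at this
    have h5 : ‖h z‖ < 1.04 := by linarith
    have h6 : ‖v z‖ * ‖v z‖ < 1.04 := by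
      rw [← norm_mul, ← hsq]; exact h5
    nlinarith [norm_nonneg (v z)]
  have hschwarz := Complex.dist_le_div_mul_dist_of_mapsTo_ball
    (c := z₀) (R₁ := 1) (R₂ := 1.1)
    hvd.differentiableOn (hmaps.mono_right ball_subset_closedBall) (z := z₀ + 1/2) (by
      rw [mem_ball, Complex.dist_eq]
      norm_num)
  rw [hvz₀] at hschwarz
  have hdist : dist (z₀ + 1/2 : ℂ) z₀ = 1/2 := by
    rw [Complex.dist_eq]
    simp only [add_sub_cancel_left]
    norm_num
  rw [hdist, dist_zero_right] at hschwarz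
  have hv1 : ‖v (z₀ + 1/2)‖ ≤ 0.55 := by
    calc ‖v (z₀ + 1/2)‖ ≤ 1.1 / 1 * (1/2) := hschwarz
      _ = 0.55 := by norm_num
  have hh1 : ‖h (z₀ + 1/2)‖ ≤ 0.3025 := by
    rw [hsq, norm_mul]
    nlinarith [norm_nonneg (v (z₀ + 1/2))]
  have habs_half : ‖(1:ℂ)/2‖ = 1/2 := by
    rw [norm_div]
    norm_num
  have hz1abs : ‖z₀ + 1/2‖ ≤ ‖p‖ + 2 := by
    have h3 := norm_add_le z₀ (1/2)
    rw [habs_half] at h3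
    linarith
  have hlow := happ (z₀ + 1/2) hz1abs
  have h7 : 1/2 - 3/100 ≤ ‖z₀ + 1/2 - p‖ := by
    have h8 := abs_lower ((1:ℂ)/2) (-(z₀ - p))
    have he : (1:ℂ)/2 - -(z₀ - p) = z₀ + 1/2 - p := by ring
    rw [he, norm_neg, habs_half] at h8
    linarith
  have h9 : 1/2 - 3/100 - 1/100 ≤ ‖h (z₀ + 1/2)‖ := by
    have h10 := abs_lower (z₀ + 1/2 - p) (h (z₀ + 1/2))
    rw [norm_sub_rev (z₀ + 1/2 - p) (h (z₀ + 1/2))] at h10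
    linarith
  linarith

/-- For all `a, b ∈ ℂ`, the map `P(g)(z) = g(z+a)·g(z+b)` is not hypercyclic
on the space of entire functions. -/
theorem P_not_hypercyclic (a b : ℂ) :
    ¬ ∃ g : ℂ → ℂ, Differentiable ℂ g ∧
      ∀ f : ℂ → ℂ, Differentiable ℂ f → ∀ ε > (0 : ℝ), ∀ R > (0 : ℝ),
        ∃ n : ℕ, ∀ z : ℂ, ‖z‖ ≤ R →
          ‖(P a b)^[n] g z - f z‖ < ε := by
  rintro ⟨g, hg, hyp⟩
  by_cases hab : a = b
  · subst hab
    have hR1 : (0:ℝ) < ‖(0:ℂ)‖ + 2 := by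
      have := norm_nonneg (0:ℂ); linarith
    obtain ⟨n₁, h₁⟩ := hyp (fun z => z - 0) (differentiable_id.sub_const 0) (1/100)
      (by norm_num) (‖(0:ℂ)‖ + 2) hR1
    match n₁ with
    | Nat.succ m =>
      refine keyB (a := a) (u := (P a a)^[m] g) 0 (P_iter_diff hg m) ?_
      intro z hz
      have := h₁ z hz
      rwa [Function.iterate_succ_apply'] at this
    | 0 =>
      have hR2 : (0:ℝ) < ‖(1:ℂ)‖ + 2 := by
        have := norm_nonneg (1:ℂ); linarith
      obtain ⟨n₂, h₂⟩ := hyp (fun z => z - 1) (differentiable_id.sub_const 1) (1/100)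
        (by norm_num) (‖(1:ℂ)‖ + 2) hR2
      match n₂ with
      | Nat.succ m =>
        refine keyB (a := a) (u := (P a a)^[m] g) 1 (P_iter_diff hg m) ?_
        intro z hz
        have := h₂ z hz
        rwa [Function.iterate_succ_apply'] at this
      | 0 =>
        have e1 := h₁ 0 (by norm_num)
        have e2 := h₂ 0 (by norm_num)
        simp only [Function.iterate_zero, id_eq, sub_zero, zero_sub] at e1 e2
        have he : (g 0 - -1) - (g 0 - 0) = 1 := by ring
        have h3 := abs_tri (g 0 - -1) (g 0 - 0)
        rw [he] at h3
        rw [norm_one] at h3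
        rw [sub_neg_eq_add] at e2 h3
        rw [sub_zero] at h3
        linarith
  · have hcpos : 0 < ‖a - b‖ := by
      rw [norm_pos_iff]; exact sub_ne_zero.mpr hab
    set ε := min 1 (‖a - b‖) / 8 with hε
    have hεpos : 0 < ε := by
      rw [hε]
      have : (0:ℝ) < min 1 (‖a - b‖) := lt_min one_pos hcpos
      linarith
    have hε2 : ε ≤ 1/8 := by
      rw [hε]
      have : min 1 (‖a - b‖) ≤ 1 := min_le_left _ _
      linarith
    have hε1 : 8 * ε ≤ ‖a - b‖ := by
      rw [hε]
      have : min 1 (‖a - b‖) ≤ ‖a - b‖ := min_le_right _ _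
      linarith
    have hR1 : (0:ℝ) < ‖(0:ℂ)‖ + ‖a - b‖ + 1 := by
      have := norm_nonneg (0:ℂ); linarith
    obtain ⟨n₁, h₁⟩ := hyp (fun z => z - 0) (differentiable_id.sub_const 0) ε hεpos
      (‖(0:ℂ)‖ + ‖a - b‖ + 1) hR1
    match n₁ with
    | Nat.succ m =>
      refine keyA (a := a) (b := b) (u := (P a b)^[m] g) 0 hεpos hε2 hε1 (P_iter_diff hg m) ?_
      intro z hz
      have := h₁ z hz
      rwa [Function.iterate_succ_apply'] at this
    | 0 =>
      have hR2 : (0:ℝ) < ‖(1:ℂ)‖ + ‖a - b‖ + 1 := by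
        have := norm_nonneg (1:ℂ); linarith
      obtain ⟨n₂, h₂⟩ := hyp (fun z => z - 1) (differentiable_id.sub_const 1) ε hεpos
        (‖(1:ℂ)‖ + ‖a - b‖ + 1) hR2
      match n₂ with
      | Nat.succ m =>
        refine keyA (a := a) (b := b) (u := (P a b)^[m] g) 1 hεpos hε2 hε1
          (P_iter_diff hg m) ?_
        intro z hz
        have := h₂ z hz
        rwa [Function.iterate_succ_apply'] at this
      | 0 =>
        have e1 := h₁ 0 (by simp; positivity)
        have e2 := h₂ 0 (by simp; positivity)
        simp only [Function.iterate_zero, id_eq, sub_zero, zero_sub] at e1 e2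
        have he : (g 0 - -1) - (g 0 - 0) = 1 := by ring
        have h3 := abs_tri (g 0 - -1) (g 0 - 0)
        rw [he, norm_one] at h3
        rw [sub_neg_eq_add] at e2 h3
        rw [sub_zero] at h3
        linarith
end
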